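/- Let A be a set with a binary operation · satisfying (S1) x·(y·z) = (x·y)·z, (S2) x·x = x, (S3) (x·y)·(u·v) = (x·u)·(y·v) for all elements, and (S4) for all x, y ∈ A, x·y = y·x implies x = y. Then for every binary term t over the signature {·}, the derived algebra (A, t^A), with binary operation (a, b) ↦ t^A(a, b), also satisfies (S1), (S2), (S3), and (S4). In particular, the quasivariety defined by (S1)–(S4) is solid. -/

import Mathlib

/-- Binary terms over the signature of one binary operation symbol `·`,
with two variables `x` and `y`. -/
inductive BTerm : Type
  | x : BTerm
  | y : BTerm
  | op : BTerm → BTerm → BTerm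

/-- The term function `t^A : A → A → A` of a binary term `t` in an algebra
`(A, m)` with one binary operation `m`. -/
def BTerm.eval {A : Type*} (m : A → A → A) : BTerm → A → A → A
  | BTerm.x, a, _ => a
  | BTerm.y, _, b => b
  | BTerm.op p q, a, b => m (BTerm.eval m p a b) (BTerm.eval m q a b)

/-- Leftmost variable of a binary term (`true` = `x`). -/
def BTerm.lv : BTerm → Bool
  | .x => true
  | .y => false
  | .op p _ => p.lv

/-- Rightmost variable of a binary term (`true` = `x`). -/
def BTerm.rv : BTerm → Bool
  | .x => true
  | .y => false
  | .op _ q => q.rv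

/-- In any algebra `(A, m)` satisfying (S1)-(S4), every derived
algebra `(A, t^A)` also satisfies (S1)-(S4): the quasivariety defined by (S1)-(S4)
is solid. -/
theorem derived_algebra_satisfies_S1_S4 {A : Type*} (m : A → A → A)
    (S1 : ∀ x y z : A, m x (m y z) = m (m x y) z)
    (S2 : ∀ x : A, m x x = x)
    (S3 : ∀ x y u v : A, m (m x y) (m u v) = m (m x u) (m y v))
    (S4 : ∀ x y : A, m x y = m y x → x = y)
    (t : BTerm) :
    (∀ a b c : A, t.eval m a (t.eval m b c) = t.eval m (t.eval m a b) c) ∧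
    (∀ a : A, t.eval m a a = a) ∧
    (∀ a b u v : A,
      t.eval m (t.eval m a b) (t.eval m u v) = t.eval m (t.eval m a u) (t.eval m b v)) ∧
    (∀ a b : A, t.eval m a b = t.eval m b a → a = b) := by
  -- The algebra is a rectangular band: (x·y)·x = x.
  have rect : ∀ x y : A, m (m x y) x = x := by
    intro x y
    apply (S4 x (m (m x y) x) _).symm
    have h1 : m x (m (m x y) x) = m (m x y) x := by
      rw [S1, S1, S2]
    have h2 : m (m (m x y) x) x = m (m x y) x := by
      rw [← S1, S2]
    rw [h1, h2]
  -- Hence x·(y·z) = x·z and (x·y)·z = x·z.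
  have three' : ∀ a b c : A, m a (m b c) = m a c := by
    intro a b c
    have h0 : m (m a (m b c)) a = a := rect a (m b c)
    have h1 : m c (m a c) = c := by rw [S1]; exact rect c a
    calc m a (m b c) = m a (m b (m c (m a c))) := by rw [h1]
      _ = m (m (m a (m b c)) a) c := by simp only [← S1]
      _ = m a c := by rw [h0]
  have three : ∀ a b c : A, m (m a b) c = m a c := by
    intro a b c; rw [← S1, three']
  -- Every term function is m (leftmost) (rightmost).
  have key : ∀ (s : BTerm) (a b : A),
      s.eval m a b = m (if s.lv then a else b) (if s.rv then a else b) := by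
    intro s
    induction s with
    | x => intro a b; simp [BTerm.eval, BTerm.lv, BTerm.rv, S2]
    | y => intro a b; simp [BTerm.eval, BTerm.lv, BTerm.rv, S2]
    | op p q ihp ihq =>
        intro a b
        simp only [BTerm.eval, BTerm.lv, BTerm.rv, ihp, ihq]
        rw [three, three']
        rfl
  rcases hl : t.lv with _ | _ <;> rcases hr : t.rv with _ | _
  · -- leftmost y, rightmost y : t^A a b = b
    have h : ∀ a b : A, t.eval m a b = b := by
      intro a b; rw [key, hl, hr]; simp [S2]
    refine ⟨fun a b c => by simp only [h], fun a => h a a,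
      fun a b u v => by simp only [h], fun a b hab => by
        rw [h, h] at hab; exact hab.symm⟩
  · -- leftmost y, rightmost x : t^A a b = m b a
    have h : ∀ a b : A, t.eval m a b = m b a := by
      intro a b; rw [key, hl, hr]; simp
    refine ⟨fun a b c => by rw [h, h, h, h, three, three'],
      fun a => by rw [h, S2],
      fun a b u v => by rw [h, h, h, h, h, h, three, three', three, three'],
      fun a b hab => by rw [h, h] at hab; exact S4 a b hab.symm⟩
  · -- leftmost x, rightmost y : t^A a b = m a b
    have h : ∀ a b : A, t.eval m a b = m a b := by
      intro a b; rw [key, hl, hr]; simp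
    refine ⟨fun a b c => by rw [h, h, h, h, S1],
      fun a => by rw [h, S2],
      fun a b u v => by rw [h, h, h, h, h, h, S3],
      fun a b hab => by rw [h, h] at hab; exact S4 a b hab⟩
  · -- leftmost x, rightmost x : t^A a b = a
    have h : ∀ a b : A, t.eval m a b = a := by
      intro a b; rw [key, hl, hr]; simp [S2]
    refine ⟨fun a b c => by simp only [h], fun a => h a a,
      fun a b u v => by simp only [h], fun a b hab => by
        rw [h, h] at hab; exact hab⟩
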